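/- The map F(x,y) = (x, √(1+x²)·sinh y, √(1+x²)·cosh y, √(1+x²) − 1) into ℝ⁴ with metric dx₁² + dx₂² − dx₃² + dt² satisfies: the first three components lie on the hyperboloid x₁² + x₂² − x₃² = −1 with x₃ > 0; moreover ⟨F_x, F_x⟩ = 1, ⟨F_x, F_y⟩ = 0, and ⟨F_y, F_y⟩ = 1 + x², where ⟨·,·⟩ is the ambient metric applied to the partial derivative vectors. -/

import Mathlib

open Real

/-- Pseudo-metric dx₁² + dx₂² − dx₃² + dt² on ℝ⁴ = ℝ³₁ × ℝ. -/
def g4 (u v : ℝ × ℝ × ℝ × ℝ) : ℝ :=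
  u.1 * v.1 + u.2.1 * v.2.1 - u.2.2.1 * v.2.2.1 + u.2.2.2 * v.2.2.2

theorem stmt_18 (F : ℝ → ℝ → ℝ × ℝ × ℝ × ℝ)
    (hF : F = fun x y =>
      (x, Real.sqrt (1 + x^2) * Real.sinh y, Real.sqrt (1 + x^2) * Real.cosh y,
        Real.sqrt (1 + x^2) - 1)) :
    ∀ x y : ℝ,
      (F x y).1 ^ 2 + (F x y).2.1 ^ 2 - (F x y).2.2.1 ^ 2 = -1 ∧
      0 < (F x y).2.2.1 ∧
      g4 (deriv (fun s => F s y) x) (deriv (fun s => F s y) x) = 1 ∧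
      g4 (deriv (fun s => F s y) x) (deriv (fun t => F x t) y) = 0 ∧
      g4 (deriv (fun t => F x t) y) (deriv (fun t => F x t) y) = 1 + x^2 := by
  subst hF
  intro x y
  have hs0 : (0:ℝ) < 1 + x ^ 2 := by positivity
  set s := Real.sqrt (1 + x ^ 2) with hsdef
  have hs : s ^ 2 = 1 + x ^ 2 := Real.sq_sqrt hs0.le
  have hspos : 0 < s := Real.sqrt_pos.2 hs0
  have hcs := Real.cosh_sq_sub_sinh_sq y
  have hds : HasDerivAt (fun t : ℝ => Real.sqrt (1 + t ^ 2)) (x / s) x := by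
    have h1 : HasDerivAt (fun t : ℝ => 1 + t ^ 2) (2 * x) x := by
      simpa using (hasDerivAt_pow 2 x).const_add 1
    have h2 := h1.sqrt (by positivity)
    convert h2 using 1
    rw [← hsdef]
    field_simp
  have hFx : HasDerivAt (fun t : ℝ =>
      ((t, Real.sqrt (1 + t ^ 2) * Real.sinh y, Real.sqrt (1 + t ^ 2) * Real.cosh y,
        Real.sqrt (1 + t ^ 2) - 1) : ℝ × ℝ × ℝ × ℝ))
      (1, x / s * Real.sinh y, x / s * Real.cosh y, x / s) x :=
    (hasDerivAt_id x).prodMk ((hds.mul_const _).prodMk ((hds.mul_const _).prodMk (hds.sub_const 1)))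
  have hFy : HasDerivAt (fun t : ℝ =>
      ((x, s * Real.sinh t, s * Real.cosh t, s - 1) : ℝ × ℝ × ℝ × ℝ))
      (0, s * Real.cosh y, s * Real.sinh y, 0) y :=
    (hasDerivAt_const y x).prodMk (((Real.hasDerivAt_sinh y).const_mul s).prodMk
      (((Real.hasDerivAt_cosh y).const_mul s).prodMk (hasDerivAt_const y (s - 1))))
  rw [hFx.deriv, hFy.deriv]
  refine ⟨?_, ?_, ?_, ?_, ?_⟩
  · simp only
    nlinarith [hs, hcs]
  · simp only
    exact mul_pos hspos (Real.cosh_pos y)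
  · simp only [g4]
    field_simp
    nlinarith [hs, hcs]
  · simp only [g4]
    ring
  · simp only [g4]
    nlinarith [hs, hcs]
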